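/- If g : [a,b] → ℝ has a derivative (finite or infinite) at every point of a set E ⊆ [a,b] and the image g(E) has Lebesgue measure zero, then g'(x) = 0 for almost every x ∈ E. -/

import Mathlib

open Set MeasureTheory Filter
open scoped Classical

/-- A tagged partition of `[a, b]`: division points `t 0 = a ≤ t 1 ≤ ⋯ ≤ t n = b`
together with tags `tag i ∈ [t i, t (i+1)]`. -/
structure TaggedPartition (a b : ℝ) where
  n : ℕ
  t : ℕ → ℝ
  tag : ℕ → ℝ
  t_first : t 0 = a
  t_last : t n = b
  t_mono : ∀ i < n, t i ≤ t (i + 1)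
  tag_mem : ∀ i < n, tag i ∈ Set.Icc (t i) (t (i + 1))

/-- A tagged partition is subordinate to a gauge `δ` if each interval is contained in the
open ball of radius `δ` around its tag. -/
def TaggedPartition.Subordinate {a b : ℝ} (P : TaggedPartition a b) (δ : ℝ → ℝ) : Prop :=
  ∀ i < P.n,
    Set.Icc (P.t i) (P.t (i + 1)) ⊆ Set.Ioo (P.tag i - δ (P.tag i)) (P.tag i + δ (P.tag i))

/-- A gauge on `[a, b]` is positive on `[a, b]`. -/
def IsGauge (a b : ℝ) (δ : ℝ → ℝ) : Prop := ∀ x ∈ Set.Icc a b, 0 < δ x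

/-- `f` has negligible variation on `E ⊆ [a, b]`. -/

def NegVar (a b : ℝ) (f : ℝ → ℝ) (E : Set ℝ) : Prop :=
  ∀ ε > 0, ∃ δ : ℝ → ℝ, IsGauge a b δ ∧ ∀ P : TaggedPartition a b, P.Subordinate δ →
    (∑ i ∈ Finset.range P.n,
      if P.tag i ∈ E then |f (P.t (i + 1)) - f (P.t i)| else 0) < ε

/-- `f` has negligible conditional variation on `E ⊆ [a, b]`. -/

def NegCondVar (a b : ℝ) (f : ℝ → ℝ) (E : Set ℝ) : Prop :=
  ∀ ε > 0, ∃ δ : ℝ → ℝ, IsGauge a b δ ∧ ∀ P : TaggedPartition a b, P.Subordinate δ →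
    |∑ i ∈ Finset.range P.n,
      if P.tag i ∈ E then f (P.t (i + 1)) - f (P.t i) else 0| < ε

/-- `I` is the Henstock–Kurzweil integral of `h` on `[a, b]` (with `a ≤ b`). -/
def HKIntegralTo (a b : ℝ) (h : ℝ → ℝ) (I : ℝ) : Prop :=
  ∀ ε > 0, ∃ δ : ℝ → ℝ, IsGauge a b δ ∧ ∀ P : TaggedPartition a b, P.Subordinate δ →
    |(∑ i ∈ Finset.range P.n, h (P.tag i) * (P.t (i + 1) - P.t i)) - I| < ε

/-- Oriented HK integral: `(HK)∫_a^b h = I`, with the convention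
`(HK)∫_b^a h = -(HK)∫_a^b h`. -/
def HKIntegral (a b : ℝ) (h : ℝ → ℝ) (I : ℝ) : Prop :=
  if a ≤ b then HKIntegralTo a b h I else HKIntegralTo b a h (-I)

open scoped ENNReal NNReal


lemma antilip_null (c : ℝ) (hc : 0 < c) (g : ℝ → ℝ) (s : Set ℝ)
    (h : ∀ x ∈ s, ∀ y ∈ s, c * |x - y| ≤ |g x - g y|)
    (h0 : volume (g '' s) = 0) : volume s = 0 := by
  have inj : Set.InjOn g s := by
    intro x hx y hy hxy
    have h1 := h x hx y hy
    rw [hxy, sub_self, abs_zero] at h1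
    have h2 : |x - y| ≤ 0 := by nlinarith [abs_nonneg (x - y)]
    have := abs_nonneg (x - y)
    have : |x - y| = 0 := le_antisymm h2 this
    have : x - y = 0 := abs_eq_zero.mp this
    linarith
  set f := Function.invFunOn g s with hf
  have hsub : s ⊆ f '' (g '' s) := by
    intro x hx
    exact ⟨g x, mem_image_of_mem _ hx, inj.leftInvOn_invFunOn hx⟩
  have lip : LipschitzOnWith (c⁻¹).toNNReal f (g '' s) := by
    apply LipschitzOnWith.of_dist_le_mul
    rintro u ⟨x, hx, rfl⟩ v ⟨y, hy, rfl⟩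
    have hux : f (g x) = x := inj.leftInvOn_invFunOn hx
    have hvy : f (g y) = y := inj.leftInvOn_invFunOn hy
    rw [hux, hvy]
    have h1 := h x hx y hy
    rw [Real.dist_eq, Real.dist_eq]
    rw [Real.coe_toNNReal _ (le_of_lt (inv_pos.mpr hc))]
    have h2 := mul_le_mul_of_nonneg_left h1 (inv_pos.mpr hc).le
    rwa [← mul_assoc, inv_mul_cancel₀ hc.ne', one_mul] at h2
  refine le_antisymm ?_ zero_le
  calc volume s ≤ volume (f '' (g '' s)) := measure_mono hsub
    _ = μH[1] (f '' (g '' s)) := by rw [MeasureTheory.hausdorffMeasure_real]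
    _ ≤ ((c⁻¹).toNNReal : ℝ≥0∞) ^ (1:ℝ) * μH[1] (g '' s) :=
        lip.hausdorffMeasure_image_le zero_le_one
    _ = ((c⁻¹).toNNReal : ℝ≥0∞) * volume (g '' s) := by
        rw [MeasureTheory.hausdorffMeasure_real, ENNReal.rpow_one]
    _ = 0 := by rw [h0, mul_zero]


lemma key_pt (g : ℝ → ℝ) (x : ℝ)
    (hx : (∃ L : ℝ, HasDerivAt g L x) ∨
      Filter.Tendsto (fun y => (g y - g x) / (y - x)) (nhdsWithin x {x}ᶜ) Filter.atTop ∨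
      Filter.Tendsto (fun y => (g y - g x) / (y - x)) (nhdsWithin x {x}ᶜ) Filter.atBot)
    (hne : ¬ HasDerivAt g 0 x) :
    ∃ n : ℕ, ∀ y, |y - x| < ((n:ℝ)+1)⁻¹ → ((n:ℝ)+1)⁻¹ * |y - x| ≤ |g y - g x| := by
  have main : ∃ c : ℝ, 0 < c ∧ ∀ᶠ y in nhdsWithin x {x}ᶜ, c ≤ |(g y - g x) / (y - x)| := by
    rcases hx with ⟨L, hL⟩ | hT | hT
    · have hL0 : L ≠ 0 := fun h => hne (h ▸ hL)
      have hsl : slope g x = fun y => (g y - g x) / (y - x) :=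
        funext fun y => slope_def_field g x y
      have hT : Filter.Tendsto (fun y => (g y - g x) / (y - x)) (nhdsWithin x {x}ᶜ) (nhds L) := by
        have := hasDerivAt_iff_tendsto_slope.mp hL
        rwa [hsl] at this
      refine ⟨|L|/2, by positivity, ?_⟩
      have habs : Filter.Tendsto (fun y => |(g y - g x) / (y - x)|) (nhdsWithin x {x}ᶜ)
          (nhds |L|) := hT.abs
      exact habs.eventually (eventually_ge_nhds (by have := abs_pos.mpr hL0; linarith))
    · refine ⟨1, one_pos, (hT.eventually_ge_atTop 1).mono fun y hy => hy.trans (le_abs_self _)⟩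
    · refine ⟨1, one_pos, (hT.eventually_le_atBot (-1)).mono fun y hy => ?_⟩
      have := neg_abs_le ((g y - g x) / (y - x))
      linarith
  obtain ⟨c, hc, hev⟩ := main
  rw [eventually_nhdsWithin_iff, Metric.eventually_nhds_iff] at hev
  obtain ⟨r, hr, H⟩ := hev
  obtain ⟨n, hn⟩ := exists_nat_one_div_lt (lt_min hc hr)
  have hn' : ((n:ℝ)+1)⁻¹ < min c r := by rwa [one_div] at hn
  refine ⟨n, fun y hy => ?_⟩
  rcases eq_or_ne y x with rfl | hyx
  · simp
  · have hd : dist y x < r := by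
      rw [Real.dist_eq]; exact hy.trans_le (hn'.le.trans (min_le_right _ _))
    have hcy := H hd hyx
    have habs : 0 < |y - x| := abs_pos.mpr (sub_ne_zero.mpr hyx)
    rw [abs_div] at hcy
    rw [le_div_iff₀ habs] at hcy
    have hcc : ((n:ℝ)+1)⁻¹ ≤ c := hn'.le.trans (min_le_left _ _)
    nlinarith [abs_nonneg (y - x)]

/-- If `g` has a derivative (finite or infinite) at every point of `E ⊆ [a,b]`
and `g(E)` has measure zero, then `g' = 0` almost everywhere on `E`. -/
theorem stmt0 (a b : ℝ) (g : ℝ → ℝ) (E : Set ℝ) (hE : E ⊆ Set.Icc a b)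
    (hderiv : ∀ x ∈ E, (∃ L : ℝ, HasDerivAt g L x) ∨
      Filter.Tendsto (fun y => (g y - g x) / (y - x)) (nhdsWithin x {x}ᶜ) Filter.atTop ∨
      Filter.Tendsto (fun y => (g y - g x) / (y - x)) (nhdsWithin x {x}ᶜ) Filter.atBot)
    (himg : MeasureTheory.volume (g '' E) = 0) :
    MeasureTheory.volume {x ∈ E | ¬ HasDerivAt g 0 x} = 0 := by
  have hnull : ∀ (n : ℕ) (k : ℤ), volume
      ({x ∈ E | ∀ y, |y - x| < ((n:ℝ)+1)⁻¹ → ((n:ℝ)+1)⁻¹ * |y - x| ≤ |g y - g x|} ∩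
        Icc ((k:ℝ) * (((n:ℝ)+1)⁻¹/2)) (((k:ℝ)+1) * (((n:ℝ)+1)⁻¹/2))) = 0 := by
    intro n k
    have hc : (0:ℝ) < ((n:ℝ)+1)⁻¹ := by positivity
    apply antilip_null ((n:ℝ)+1)⁻¹ hc g
    · rintro x ⟨⟨hxE, hxp⟩, hxI⟩ y ⟨⟨hyE, hyp⟩, hyI⟩
      have hd0 : (0:ℝ) < ((n:ℝ)+1)⁻¹/2 := by positivity
      have hxy : |y - x| < ((n:ℝ)+1)⁻¹ := by
        rw [abs_sub_lt_iff]
        obtain ⟨h1, h2⟩ := hxI; obtain ⟨h3, h4⟩ := hyI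
        constructor <;> nlinarith
      have := hxp y hxy
      rwa [abs_sub_comm x y, abs_sub_comm (g x) (g y)]
    · refine measure_mono_null (image_mono (f := g) ?_) himg
      rintro x ⟨⟨hxE, _⟩, _⟩
      exact hxE
  have cover : {x ∈ E | ¬ HasDerivAt g 0 x} ⊆ ⋃ (n : ℕ), ⋃ (k : ℤ),
      ({x ∈ E | ∀ y, |y - x| < ((n:ℝ)+1)⁻¹ → ((n:ℝ)+1)⁻¹ * |y - x| ≤ |g y - g x|} ∩
        Icc ((k:ℝ) * (((n:ℝ)+1)⁻¹/2)) (((k:ℝ)+1) * (((n:ℝ)+1)⁻¹/2))) := by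
    rintro x ⟨hxE, hxne⟩
    obtain ⟨n, hn⟩ := key_pt g x (hderiv x hxE) hxne
    set d : ℝ := ((n:ℝ)+1)⁻¹/2 with hd
    have hd0 : 0 < d := by positivity
    refine mem_iUnion.mpr ⟨n, mem_iUnion.mpr ⟨⌊x/d⌋, ⟨hxE, hn⟩, ?_, ?_⟩⟩
    · calc ((⌊x/d⌋:ℝ)) * d ≤ (x/d) * d :=
            mul_le_mul_of_nonneg_right (Int.floor_le (x/d)) hd0.le
        _ = x := div_mul_cancel₀ x hd0.ne'
    · calc x = (x/d) * d := (div_mul_cancel₀ x hd0.ne').symm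
        _ ≤ ((⌊x/d⌋:ℝ) + 1) * d :=
            mul_le_mul_of_nonneg_right (Int.lt_floor_add_one (x/d)).le hd0.le
  exact measure_mono_null cover
    (measure_iUnion_null fun n => measure_iUnion_null fun k => hnull n k)
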